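/- Let τ > 0 and let f, g be C^2 real functions with f > 0, g > 0, f' < 0, and g' > 0 on an open interval I containing −τ, and with f(−τ) > 0. Then the unique continuous solution L of (1 + u/τ) L'(u) + f(u) L(u) − g(u) = 0 is strictly increasing on I. -/

import Mathlib

open Real Set Filter Topology

lemma blowup11 (a C δ : ℝ) (hC : 0 < C) (hδ : 0 < δ) (L : ℝ → ℝ)
    (hLc : ContinuousAt L a)
    (hd : ∀ u ∈ Set.Ioo a (a + δ), DifferentiableAt ℝ L u)
    (hd' : ∀ u ∈ Set.Ioo a (a + δ), C / (u - a) ≤ deriv L u) : False := by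
  set M : ℝ → ℝ := fun u => L u - C * Real.log (u - a) with hM
  have hMd : ∀ u ∈ Set.Ioo a (a + δ), HasDerivAt M (deriv L u - C * (u - a)⁻¹) u := by
    intro u hu
    have h1 : u - a ≠ 0 := ne_of_gt (by linarith [hu.1] : (0:ℝ) < u - a)
    have hlog : HasDerivAt (fun u => Real.log (u - a)) ((u - a)⁻¹) u := by
      have := (Real.hasDerivAt_log h1).comp u ((hasDerivAt_id u).sub_const a)
      simpa [Function.comp_def] using this
    exact ((hd u hu).hasDerivAt).sub (hlog.const_mul C)
  have hmono : MonotoneOn M (Set.Ioo a (a + δ)) := by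
    apply monotoneOn_of_deriv_nonneg (convex_Ioo _ _)
    · intro u hu; exact (hMd u hu).differentiableAt.continuousAt.continuousWithinAt
    · intro u hu
      rw [interior_Ioo] at hu
      exact (hMd u hu).differentiableAt.differentiableWithinAt
    · intro u hu
      rw [interior_Ioo] at hu
      rw [(hMd u hu).deriv]
      have h1 : (0:ℝ) < u - a := by linarith [hu.1]
      have h2 := hd' u hu
      rw [div_eq_mul_inv] at h2
      linarith
  set b := a + δ / 2 with hb
  have hbmem : b ∈ Set.Ioo a (a + δ) := ⟨by rw [hb]; linarith, by rw [hb]; linarith⟩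
  have hblt : a < b := hbmem.1
  have hev : ∀ᶠ x in 𝓝[>] a, L x ≤ M b + C * Real.log (x - a) := by
    filter_upwards [Ioo_mem_nhdsGT_of_mem (⟨le_refl a, hblt⟩ : a ∈ Set.Ico a b)] with x hx
    have hx' : x ∈ Set.Ioo a (a + δ) := ⟨hx.1, lt_trans hx.2 hbmem.2⟩
    have := hmono hx' hbmem (le_of_lt hx.2)
    simp only [M] at this ⊢
    linarith
  have h1 : Tendsto (fun x => x - a) (𝓝[>] a) (𝓝[>] (0:ℝ)) := by
    apply tendsto_nhdsWithin_of_tendsto_nhds_of_eventually_within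
    · have : Tendsto (fun x => x - a) (𝓝 a) (𝓝 (a - a)) :=
        (continuous_id.sub continuous_const).continuousAt
      simpa using this.mono_left nhdsWithin_le_nhds
    · filter_upwards [self_mem_nhdsWithin] with x hx
      exact sub_pos.2 (Set.mem_Ioi.mp hx)
  have htends : Tendsto (fun x => M b + C * Real.log (x - a)) (𝓝[>] a) atBot := by
    apply tendsto_atBot_add_const_left
    exact (Real.tendsto_log_nhdsGT_zero.comp h1).const_mul_atBot hC
  have hL' : Tendsto L (𝓝[>] a) (𝓝 (L a)) := hLc.tendsto.mono_left nhdsWithin_le_nhds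
  have hbot : Tendsto L (𝓝[>] a) atBot := tendsto_atBot_mono' _ hev htends
  exact not_tendsto_atBot_of_tendsto_nhds hL' hbot
open Real Set Filter Topology

/-- Let `τ > 0`, `f, g` of class `C²` with `f > 0`, `g > 0`, `f' < 0`, `g' > 0` on an open
interval `I = (p, q)` containing `−τ` (and `f(−τ) > 0`). Then the unique continuous solution
`L` of `(1 + u/τ) L'(u) + f(u) L(u) − g(u) = 0` is strictly increasing on `I`. -/
theorem stmt11 (τ : ℝ) (hτ : 0 < τ) (f g : ℝ → ℝ)
    (hf : ContDiff ℝ 2 f) (hg : ContDiff ℝ 2 g)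
    (p q : ℝ) (hpq : -τ ∈ Set.Ioo p q)
    (hfpos : ∀ u ∈ Set.Ioo p q, 0 < f u) (hgpos : ∀ u ∈ Set.Ioo p q, 0 < g u)
    (hf' : ∀ u ∈ Set.Ioo p q, deriv f u < 0) (hg' : ∀ u ∈ Set.Ioo p q, 0 < deriv g u)
    (L : ℝ → ℝ) (hLc : Continuous L)
    (hLd : ∀ u : ℝ, u ≠ -τ → DifferentiableAt ℝ L u)
    (hL : ∀ u : ℝ, u ≠ -τ → (1 + u / τ) * deriv L u + f u * L u - g u = 0) :
    StrictMonoOn L (Set.Ioo p q) := by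
  obtain ⟨hp, hq⟩ := hpq
  have hτne : τ ≠ 0 := ne_of_gt hτ
  have hfd : Differentiable ℝ f := hf.differentiable (by norm_num)
  have hgd : Differentiable ℝ g := hg.differentiable (by norm_num)
  -- derivative formula for L away from -τ
  have hLderiv : ∀ u : ℝ, u ≠ -τ → deriv L u = (g u - f u * L u) * τ / (u + τ) := by
    intro u hu
    have h1 : u + τ ≠ 0 := fun h => hu (by linarith)
    have h2 := hL u hu
    rw [eq_div_iff h1]
    have h3 : (1 + u / τ) = (u + τ) / τ := by field_simp; ring
    rw [h3] at h2
    have h4 : (u + τ) / τ * deriv L u = g u - f u * L u := by linarith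
    have h5 : (u + τ) * deriv L u = (g u - f u * L u) * τ := by
      field_simp at h4; linarith
    linarith [h5]
  set φ : ℝ → ℝ := fun u => g u / f u with hφdef
  have hfne : ∀ u ∈ Set.Ioo p q, f u ≠ 0 := fun u hu => ne_of_gt (hfpos u hu)
  have hτI : -τ ∈ Set.Ioo p q := ⟨hp, hq⟩
  have hφdiff : ∀ u ∈ Set.Ioo p q, DifferentiableAt ℝ φ u := fun u hu =>
    (hgd u).div (hfd u) (hfne u hu)
  have hφderivpos : ∀ u ∈ Set.Ioo p q, 0 < deriv φ u := by
    intro u hu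
    rw [hφdef, show (fun u => g u / f u) = g / f from rfl, deriv_div (hgd u) (hfd u) (hfne u hu)]
    have h1 := hfpos u hu; have h2 := hgpos u hu
    have h3 := hf' u hu; have h4 := hg' u hu
    have hnum : 0 < deriv g u * f u - g u * deriv f u := by nlinarith
    exact div_pos hnum (by positivity)
  have hφmono : StrictMonoOn φ (Set.Ioo p q) := by
    apply strictMonoOn_of_deriv_pos (convex_Ioo p q)
    · exact (hgd.continuous.continuousOn).div (hfd.continuous.continuousOn) hfne
    · intro u hu; rw [interior_Ioo] at hu; exact hφderivpos u hu
  -- Step 0: value at -τ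
  have hkey : f (-τ) * L (-τ) = g (-τ) := by
    by_contra hne
    set G : ℝ → ℝ := fun u => g u - f u * L u with hGdef
    have hGpt : ∀ u, G u = g u - f u * L u := fun _ => rfl
    have hGc : ContinuousAt G (-τ) :=
      ((hgd.continuous).sub ((hfd.continuous).mul hLc)).continuousAt
    have hGne : G (-τ) ≠ 0 := by
      rw [hGpt]
      intro h; exact hne (by linarith)
    clear_value G
    rcases hGne.lt_or_gt with hneg | hpos
    · -- G(-τ) < 0 : apply blowup to -L
      have hhalf : G (-τ) < G (-τ) / 2 := by linarith
      have hev : ∀ᶠ u in 𝓝 (-τ), G u < G (-τ) / 2 :=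
        hGc.eventually (eventually_lt_nhds hhalf)
      obtain ⟨δ, hδ, hball⟩ := Metric.eventually_nhds_iff.mp hev
      apply blowup11 (-τ) (τ * (-(G (-τ)) / 2)) δ (mul_pos hτ (by linarith)) hδ (fun u => -L u)
        hLc.continuousAt.neg
      · intro u hu; exact (hLd u (ne_of_gt hu.1)).neg
      · intro u hu
        have hune : u ≠ -τ := ne_of_gt hu.1
        have hut : 0 < u + τ := by have := hu.1; linarith
        have hdist : dist u (-τ) < δ := by
          rw [Real.dist_eq, abs_of_pos (by linarith : (0:ℝ) < u - -τ)]
          have := hu.2; linarith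
        have hGu : G u < G (-τ) / 2 := hball hdist
        rw [deriv.fun_neg, hLderiv u hune]
        have hsub : u - -τ = u + τ := by ring
        rw [hsub]
        have hre : -((g u - f u * L u) * τ / (u + τ)) = (-(g u - f u * L u) * τ) / (u + τ) := by
          ring
        rw [hre, div_le_div_iff₀ hut hut]
        have hGu' : g u - f u * L u < G (-τ) / 2 := by rw [← hGpt u]; exact hGu
        nlinarith [mul_pos (sub_pos.mpr hGu') (mul_pos hτ hut)]
    · -- G(-τ) > 0 : apply blowup to L
      have hhalf : G (-τ) / 2 < G (-τ) := by linarith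
      have hev : ∀ᶠ u in 𝓝 (-τ), G (-τ) / 2 < G u :=
        hGc.eventually (eventually_gt_nhds hhalf)
      obtain ⟨δ, hδ, hball⟩ := Metric.eventually_nhds_iff.mp hev
      apply blowup11 (-τ) (τ * (G (-τ) / 2)) δ (mul_pos hτ (by linarith)) hδ L hLc.continuousAt
      · intro u hu; exact hLd u (ne_of_gt hu.1)
      · intro u hu
        have hune : u ≠ -τ := ne_of_gt hu.1
        have hut : 0 < u + τ := by have := hu.1; linarith
        have hdist : dist u (-τ) < δ := by
          rw [Real.dist_eq, abs_of_pos (by linarith : (0:ℝ) < u - -τ)]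
          have := hu.2; linarith
        have hGu : G (-τ) / 2 < G u := hball hdist
        rw [hLderiv u hune]
        have hsub : u - -τ = u + τ := by ring
        rw [hsub, div_le_div_iff₀ hut hut]
        have hGu' : G (-τ) / 2 < g u - f u * L u := by rw [← hGpt u]; exact hGu
        nlinarith [mul_pos (sub_pos.mpr hGu') (mul_pos hτ hut)]
  have hLφτ : L (-τ) = φ (-τ) := by
    rw [hφdef, eq_div_iff (hfne _ hτI)]; linarith
  -- Step R: L < φ on (-τ, q)
  have hRle : ∀ u ∈ Set.Ioo (-τ) q, L u ≤ φ u := by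
    intro u₀ hu₀
    by_contra hgt
    push_neg at hgt
    have hu₀I : u₀ ∈ Set.Ioo p q := ⟨lt_trans hp hu₀.1, hu₀.2⟩
    have hgt' : g u₀ < f u₀ * L u₀ := by
      rw [hφdef] at hgt
      have := (div_lt_iff₀ (hfpos u₀ hu₀I)).mp hgt
      linarith [mul_comm (L u₀) (f u₀)]
    set Z := Set.Icc (-τ) u₀ ∩ {v : ℝ | f v * L v ≤ g v} with hZdef
    have hZclosed : IsClosed Z :=
      isClosed_Icc.inter (isClosed_le ((hfd.continuous).mul hLc) hgd.continuous)
    have hτZ : -τ ∈ Z := ⟨⟨le_refl _, le_of_lt hu₀.1⟩, le_of_eq hkey⟩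
    have hZbdd : BddAbove Z := ⟨u₀, fun v hv => hv.1.2⟩
    set s := sSup Z with hs
    have hsZ : s ∈ Z := hZclosed.csSup_mem ⟨-τ, hτZ⟩ hZbdd
    have hsτ : -τ ≤ s := hsZ.1.1
    have hsu₀ : s ≤ u₀ := hsZ.1.2
    have hsne : s ≠ u₀ := fun h => absurd hsZ.2 (by rw [h]; exact not_le.mpr hgt')
    have hslt : s < u₀ := lt_of_le_of_ne hsu₀ hsne
    have hsI : s ∈ Set.Ioo p q := ⟨lt_of_lt_of_le hp hsτ, lt_trans hslt hu₀.2⟩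
    have hup : ∀ v ∈ Set.Ioc s u₀, g v < f v * L v := by
      intro v hv
      by_contra hc
      push_neg at hc
      have : v ∈ Z := ⟨⟨le_trans hsτ (le_of_lt hv.1), hv.2⟩, hc⟩
      exact absurd (le_csSup hZbdd this) (not_le.mpr hv.1)
    have hanti : AntitoneOn L (Set.Icc s u₀) := by
      apply antitoneOn_of_deriv_nonpos (convex_Icc _ _) hLc.continuousOn
      · intro v hv
        rw [interior_Icc] at hv
        exact (hLd v (ne_of_gt (lt_of_le_of_lt hsτ hv.1))).differentiableWithinAt
      · intro v hv
        rw [interior_Icc] at hv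
        have hvne : v ≠ -τ := ne_of_gt (lt_of_le_of_lt hsτ hv.1)
        rw [hLderiv v hvne]
        have h1 : g v < f v * L v := hup v ⟨hv.1, le_of_lt hv.2⟩
        have h2 : 0 < v + τ := by have := lt_of_le_of_lt hsτ hv.1; linarith
        apply le_of_lt
        apply div_neg_of_neg_of_pos _ h2
        nlinarith
    have hLs : L u₀ ≤ L s :=
      hanti ⟨le_refl s, hsu₀⟩ ⟨hsu₀, le_refl u₀⟩ (le_of_lt hslt)
    have hLsφ : L s ≤ φ s := by
      rw [hφdef, le_div_iff₀ (hfpos s hsI)]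
      have hz : f s * L s ≤ g s := hsZ.2
      linarith [mul_comm (L s) (f s)]
    have : φ s < φ u₀ := hφmono hsI hu₀I hslt
    linarith
  have hR : ∀ u ∈ Set.Ioo (-τ) q, L u < φ u := by
    intro u₀ hu₀
    rcases lt_or_eq_of_le (hRle u₀ hu₀) with h | heq
    · exact h
    have hu₀I : u₀ ∈ Set.Ioo p q := ⟨lt_trans hp hu₀.1, hu₀.2⟩
    have hu₀ne : u₀ ≠ -τ := ne_of_gt hu₀.1
    exfalso
    have hmax : IsLocalMax (fun u => L u - φ u) u₀ := by
      filter_upwards [isOpen_Ioo.mem_nhds hu₀] with v hv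
      have := hRle v hv
      show L v - φ v ≤ L u₀ - φ u₀
      linarith [heq]
    have hder0 := hmax.deriv_eq_zero
    have hdsub : deriv (fun u => L u - φ u) u₀ = deriv L u₀ - deriv φ u₀ :=
      deriv_sub (hLd u₀ hu₀ne) (hφdiff u₀ hu₀I)
    have hLd0 : deriv L u₀ = 0 := by
      rw [hLderiv u₀ hu₀ne]
      have heq2 : f u₀ * L u₀ = g u₀ := by
        rw [heq]
        show f u₀ * (g u₀ / f u₀) = g u₀
        field_simp [hfne u₀ hu₀I]
      rw [heq2]; simp
    rw [hdsub, hLd0] at hder0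
    have := hφderivpos u₀ hu₀I
    linarith
  -- Step L: L > φ on (p, -τ)
  have hLle : ∀ u ∈ Set.Ioo p (-τ), φ u ≤ L u := by
    intro u₀ hu₀
    by_contra hgt
    push_neg at hgt
    have hu₀I : u₀ ∈ Set.Ioo p q := ⟨hu₀.1, lt_trans hu₀.2 hq⟩
    have hgt' : f u₀ * L u₀ < g u₀ := by
      rw [hφdef] at hgt
      have := (lt_div_iff₀ (hfpos u₀ hu₀I)).mp hgt
      linarith [mul_comm (L u₀) (f u₀)]
    set Z := Set.Icc u₀ (-τ) ∩ {v : ℝ | g v ≤ f v * L v} with hZdef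
    have hZclosed : IsClosed Z :=
      isClosed_Icc.inter (isClosed_le hgd.continuous ((hfd.continuous).mul hLc))
    have hτZ : -τ ∈ Z := ⟨⟨le_of_lt hu₀.2, le_refl _⟩, ge_of_eq hkey⟩
    have hZbdd : BddBelow Z := ⟨u₀, fun v hv => hv.1.1⟩
    set s := sInf Z with hs
    have hsZ : s ∈ Z := hZclosed.csInf_mem ⟨-τ, hτZ⟩ hZbdd
    have hsτ : s ≤ -τ := hsZ.1.2
    have hsu₀ : u₀ ≤ s := hsZ.1.1
    have hsne : s ≠ u₀ := fun h => absurd hsZ.2 (by rw [h]; exact not_le.mpr hgt')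
    have hslt : u₀ < s := lt_of_le_of_ne hsu₀ (Ne.symm hsne)
    have hsI : s ∈ Set.Ioo p q := ⟨lt_trans hu₀.1 hslt, lt_of_le_of_lt hsτ hq⟩
    have hdown : ∀ v ∈ Set.Ico u₀ s, f v * L v < g v := by
      intro v hv
      by_contra hc
      push_neg at hc
      have : v ∈ Z := ⟨⟨hv.1, le_trans (le_of_lt hv.2) hsτ⟩, hc⟩
      exact absurd (csInf_le hZbdd this) (not_le.mpr hv.2)
    have hanti : AntitoneOn L (Set.Icc u₀ s) := by
      apply antitoneOn_of_deriv_nonpos (convex_Icc _ _) hLc.continuousOn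
      · intro v hv
        rw [interior_Icc] at hv
        exact (hLd v (ne_of_lt (lt_of_lt_of_le hv.2 hsτ))).differentiableWithinAt
      · intro v hv
        rw [interior_Icc] at hv
        have hvlt : v < -τ := lt_of_lt_of_le hv.2 hsτ
        rw [hLderiv v (ne_of_lt hvlt)]
        have h1 : f v * L v < g v := hdown v ⟨le_of_lt hv.1, hv.2⟩
        have h2 : v + τ < 0 := by linarith
        apply le_of_lt
        exact div_neg_of_pos_of_neg (by nlinarith) h2
    have hLs : L s ≤ L u₀ :=
      hanti ⟨le_refl u₀, le_of_lt hslt⟩ ⟨le_of_lt hslt, le_refl s⟩ (le_of_lt hslt)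
    have hLsφ : φ s ≤ L s := by
      rw [hφdef, div_le_iff₀ (hfpos s hsI)]
      have hz : g s ≤ f s * L s := hsZ.2
      linarith [mul_comm (L s) (f s)]
    have : φ u₀ < φ s := hφmono hu₀I hsI hslt
    rw [hφdef] at hgt
    linarith [hgt]
  have hLft : ∀ u ∈ Set.Ioo p (-τ), φ u < L u := by
    intro u₀ hu₀
    rcases lt_or_eq_of_le (hLle u₀ hu₀) with h | heq
    · exact h
    have hu₀I : u₀ ∈ Set.Ioo p q := ⟨hu₀.1, lt_trans hu₀.2 hq⟩
    have hu₀ne : u₀ ≠ -τ := ne_of_lt hu₀.2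
    exfalso
    have hmin : IsLocalMin (fun u => L u - φ u) u₀ := by
      filter_upwards [isOpen_Ioo.mem_nhds hu₀] with v hv
      have := hLle v hv
      show L u₀ - φ u₀ ≤ L v - φ v
      linarith [heq]
    have hder0 := hmin.deriv_eq_zero
    have hdsub : deriv (fun u => L u - φ u) u₀ = deriv L u₀ - deriv φ u₀ :=
      deriv_sub (hLd u₀ hu₀ne) (hφdiff u₀ hu₀I)
    have hLd0 : deriv L u₀ = 0 := by
      rw [hLderiv u₀ hu₀ne]
      have heq2 : f u₀ * L u₀ = g u₀ := by
        rw [← heq]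
        show f u₀ * (g u₀ / f u₀) = g u₀
        field_simp [hfne u₀ hu₀I]
      rw [heq2]; simp
    rw [hdsub, hLd0] at hder0
    have := hφderivpos u₀ hu₀I
    linarith
  -- strict monotonicity on each side
  have hmonoR : StrictMonoOn L (Set.Ico (-τ) q) := by
    apply strictMonoOn_of_deriv_pos (convex_Ico _ _) hLc.continuousOn
    intro u hu
    rw [interior_Ico] at hu
    have huI : u ∈ Set.Ioo p q := ⟨lt_trans hp hu.1, hu.2⟩
    have hune : u ≠ -τ := ne_of_gt hu.1
    rw [hLderiv u hune]
    have h1 : L u < φ u := hR u hu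
    have h2 : f u * L u < g u := by
      rw [hφdef] at h1
      have := (lt_div_iff₀ (hfpos u huI)).mp h1
      linarith [mul_comm (L u) (f u)]
    have h3 : 0 < u + τ := by have := hu.1; linarith
    apply div_pos _ h3
    nlinarith
  have hmonoL : StrictMonoOn L (Set.Ioc p (-τ)) := by
    apply strictMonoOn_of_deriv_pos (convex_Ioc _ _) hLc.continuousOn
    intro u hu
    rw [interior_Ioc] at hu
    have huI : u ∈ Set.Ioo p q := ⟨hu.1, lt_trans hu.2 hq⟩
    have hune : u ≠ -τ := ne_of_lt hu.2
    rw [hLderiv u hune]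
    have h1 : φ u < L u := hLft u hu
    have h2 : g u < f u * L u := by
      rw [hφdef] at h1
      have := (div_lt_iff₀ (hfpos u huI)).mp h1
      linarith [mul_comm (L u) (f u)]
    have h3 : u + τ < 0 := by have := hu.2; linarith
    exact div_pos_of_neg_of_neg (by nlinarith) h3
  -- glue
  intro x hx y hy hxy
  rcases le_or_gt y (-τ) with h1 | h1
  · exact hmonoL ⟨hx.1, le_trans (le_of_lt hxy) h1⟩ ⟨hy.1, h1⟩ hxy
  rcases le_or_gt (-τ) x with h2 | h2
  · exact hmonoR ⟨h2, hx.2⟩ ⟨le_of_lt h1, hy.2⟩ hxy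
  · calc L x < L (-τ) := hmonoL ⟨hx.1, h2.le⟩ ⟨hp, le_refl _⟩ h2
      _ < L y := hmonoR ⟨le_refl _, hq⟩ ⟨le_of_lt h1, hy.2⟩ h1
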